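/- Let N = 2m be even, s = e^{2πi/(N−1)}, t = e^{2πi/(N+1)}. Define q_N = (s^m − 1)/(s − 1) + s^m (t^m − 1)/(t − 1). Then q_N = −2i/π + O(1/N); in particular there exists N₀ such that |q_N| ≥ 1/π for all even N ≥ N₀. -/

import Mathlib

open Complex


lemma cube_bound {z : ℂ} (hz : ‖z‖ ≤ 1) :
    ‖Complex.exp z - 1 - z - z^2/2‖ ≤ ‖z‖ ^ 3 := by
  have h := Complex.exp_bound hz (n := 3) (by norm_num)
  have hs : (∑ m ∈ Finset.range 3, z ^ m / m.factorial) = 1 + z + z^2/2 := by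
    rw [Finset.sum_range_succ, Finset.sum_range_succ, Finset.sum_range_succ]
    norm_num [Nat.factorial]
  rw [hs] at h
  have e : Complex.exp z - 1 - z - z^2/2 = Complex.exp z - (1 + z + z^2/2) := by ring
  rw [e]
  refine le_trans h ?_
  norm_num [Nat.factorial]
  nlinarith [pow_nonneg (norm_nonneg z) 3]

lemma expand_bound {z : ℂ} (hz : ‖z‖ ≤ 1/2) (hz0 : z ≠ 0) :
    ‖1/(Complex.exp z - 1) - 1/z + 1/2‖ ≤ 3 * ‖z‖ := by
  set E := Complex.exp z - 1 with hEdef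
  have habs : 0 < ‖z‖ := norm_pos_iff.mpr hz0
  have hz1 : ‖z‖ ≤ 1 := le_trans hz (by norm_num)
  have h1 : ‖E - z‖ ≤ ‖z‖ ^ 2 :=
    Complex.norm_exp_sub_one_sub_id_le hz1
  have hlow : ‖z‖ / 2 ≤ ‖E‖ := by
    have ht : ‖z‖ - ‖E‖ ≤ ‖z - E‖ := by
      simpa using norm_sub_norm_le z E
    have ht2 : ‖z - E‖ = ‖E - z‖ := norm_sub_rev z E
    nlinarith
  have hE0 : E ≠ 0 := by
    intro h
    rw [h] at hlow
    simp at hlow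
    linarith
  set r := E - z - z^2/2 with hrdef
  have hr : ‖r‖ ≤ ‖z‖ ^ 3 := cube_bound hz1
  have hid : 1/E - 1/z + 1/2 = (-2*r + z^3/2 + z*r)/(2*(z*E)) := by
    rw [hrdef]
    field_simp
    ring
  rw [hid, norm_div]
  have hnum : ‖-2*r + z^3/2 + z*r‖ ≤ 3 * ‖z‖ ^ 3 := by
    calc ‖-2*r + z^3/2 + z*r‖
        ≤ ‖-2*r‖ + ‖z^3/2‖ + ‖z*r‖ := by
          exact le_trans (norm_add_le _ _) (by gcongr; exact norm_add_le _ _)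
      _ = 2 * ‖r‖ + ‖z‖ ^ 3 / 2 + ‖z‖ * ‖r‖ := by
          simp only [norm_mul, norm_neg, norm_div, norm_pow, Complex.norm_two,
            norm_neg, Complex.norm_ofNat]
      _ ≤ 3 * ‖z‖ ^ 3 := by nlinarith [pow_nonneg (norm_nonneg z) 3]
  have hden : ‖z‖ ^ 2 ≤ ‖2*(z*E)‖ := by
    simp only [norm_mul, Complex.norm_two]
    nlinarith
  have hne : (2:ℂ)*(z*E) ≠ 0 := by simp [hz0, hE0]
  have hdenpos : (0:ℝ) < ‖2*(z*E)‖ := norm_pos_iff.mpr hne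
  rw [div_le_iff₀ hdenpos]
  calc ‖-2*r + z^3/2 + z*r‖ ≤ 3 * ‖z‖ ^ 3 := hnum
    _ = 3 * ‖z‖ * ‖z‖ ^ 2 := by ring
    _ ≤ 3 * ‖z‖ * ‖2*(z*E)‖ := by nlinarith [hden, habs.le]

lemma exp_sub_one_lower {z : ℂ} (hz : ‖z‖ ≤ 1/2) :
    ‖z‖ / 2 ≤ ‖Complex.exp z - 1‖ := by
  have hz1 : ‖z‖ ≤ 1 := le_trans hz (by norm_num)
  have h1 : ‖Complex.exp z - 1 - z‖ ≤ ‖z‖ ^ 2 :=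
    Complex.norm_exp_sub_one_sub_id_le hz1
  have ht : ‖z‖ - ‖Complex.exp z - 1‖ ≤
      ‖z - (Complex.exp z - 1)‖ := by
    simpa using norm_sub_norm_le z (Complex.exp z - 1)
  have ht2 : ‖z - (Complex.exp z - 1)‖ = ‖Complex.exp z - 1 - z‖ :=
    norm_sub_rev _ _
  nlinarith [norm_nonneg z]

lemma exp_sub_one_ne {z : ℂ} (hz : ‖z‖ ≤ 1/2) (hz0 : z ≠ 0) :
    Complex.exp z - 1 ≠ 0 := by
  have := exp_sub_one_lower hz
  have habs : 0 < ‖z‖ := norm_pos_iff.mpr hz0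
  intro h
  rw [h] at this
  simp at this
  linarith

lemma exp_add_one_ne {z : ℂ} (hz : ‖z‖ ≤ 1/2) :
    Complex.exp z + 1 ≠ 0 := by
  have h1 : ‖Complex.exp z - 1‖ ≤ 2 * ‖z‖ :=
    Complex.norm_exp_sub_one_le (le_trans hz (by norm_num))
  intro h
  have he : Complex.exp z = -1 := eq_neg_of_add_eq_zero_left h
  rw [he] at h1
  norm_num at h1
  linarith

set_option maxHeartbeats 2000000 in
theorem stmt_13 :
    ∃ K : ℝ, 0 < K ∧ ∃ N₀ : ℕ, ∀ m : ℕ, 1 ≤ m → N₀ ≤ 2 * m →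
      ∀ N : ℕ, N = 2 * m →
      ∀ s t qN : ℂ,
        s = Complex.exp (2 * Real.pi * Complex.I / (N - 1 : ℕ)) →
        t = Complex.exp (2 * Real.pi * Complex.I / (N + 1 : ℕ)) →
        qN = (s ^ m - 1) / (s - 1) + s ^ m * ((t ^ m - 1) / (t - 1)) →
        ‖qN - (-(2 * Complex.I) / Real.pi)‖ ≤ K / N ∧
        1 / Real.pi ≤ ‖qN‖ := by
  refine ⟨40, by norm_num, 1000, ?_⟩
  intro m hm hN0 N hNm s t qN hs ht hq
  -- basic real facts
  set x : ℝ := (N : ℝ) with hxdef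
  have hxge : (1000:ℝ) ≤ x := by
    rw [hxdef, hNm]; exact_mod_cast hN0
  have hπ : (0:ℝ) < Real.pi := Real.pi_pos
  have hπ315 : Real.pi < 3.15 := by
    have := Real.pi_lt_d2; linarith
  have hπ4 : Real.pi < 4 := by linarith
  have hx1 : (0:ℝ) < x - 1 := by linarith
  have hx2 : (0:ℝ) < x + 1 := by linarith
  -- θ and φ
  set θ : ℝ := Real.pi / (x - 1) with hθdef
  set φ : ℝ := Real.pi / (x + 1) with hφdef
  have hθpos : 0 < θ := div_pos hπ hx1
  have hφpos : 0 < φ := div_pos hπ hx2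
  have hθle : θ ≤ 4 / x := by
    rw [hθdef, div_le_div_iff₀ hx1 (by linarith)]
    nlinarith [hπ315, hxge]
  have hφle : φ ≤ 4 / x := by
    rw [hφdef, div_le_div_iff₀ hx2 (by linarith)]
    nlinarith [hπ315, hxge]
  have hθsmall : θ ≤ 1/2 := by
    have : (4:ℝ)/x ≤ 1/2 := by rw [div_le_div_iff₀ (by linarith : (0:ℝ)<x) (by norm_num : (0:ℝ)<2)]; linarith
    linarith
  have hφsmall : φ ≤ 1/2 := by
    have : (4:ℝ)/x ≤ 1/2 := by rw [div_le_div_iff₀ (by linarith : (0:ℝ)<x) (by norm_num : (0:ℝ)<2)]; linarith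
    linarith
  have hθφ : φ < θ := by
    rw [hθdef, hφdef]
    exact div_lt_div_of_pos_left hπ hx1 (by linarith)
  have hdiff : θ - φ ≤ 7 / x^2 := by
    rw [hθdef, hφdef]
    rw [div_sub_div _ _ (ne_of_gt hx1) (ne_of_gt hx2)]
    rw [div_le_div_iff₀ (by nlinarith) (by nlinarith)]
    have hxx : (1000:ℝ)*1000 ≤ x*x := mul_le_mul hxge hxge (by norm_num) (by linarith)
    nlinarith [hπ315, hxx, mul_le_mul_of_nonneg_right (le_of_lt hπ315) (sq_nonneg x)]
  -- complex variables
  set a : ℂ := (θ:ℝ) * I with hadef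
  set b : ℂ := (φ:ℝ) * I with hbdef
  have habs_a : ‖a‖ = θ := by
    rw [hadef]; simp [Complex.norm_real, abs_of_pos hθpos]
  have habs_b : ‖b‖ = φ := by
    rw [hbdef]; simp [Complex.norm_real, abs_of_pos hφpos]
  have ha0 : a ≠ 0 := by
    intro h; rw [h] at habs_a; simp at habs_a; linarith
  have hb0 : b ≠ 0 := by
    intro h; rw [h] at habs_b; simp at habs_b; linarith
  have ha_half : ‖a‖ ≤ 1/2 := by rw [habs_a]; exact hθsmall
  have hb_half : ‖b‖ ≤ 1/2 := by rw [habs_b]; exact hφsmall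
  -- cast identities
  have hxC1 : ((N - 1 : ℕ) : ℂ) = (x : ℂ) - 1 := by
    have h2 : 2 ≤ N := by omega
    push_cast [Nat.cast_sub (by omega : 1 ≤ N)]
    simp [hxdef]
  have hxC2 : ((N + 1 : ℕ) : ℂ) = (x : ℂ) + 1 := by push_cast; simp [hxdef]
  have hxC1ne : ((x : ℂ) - 1) ≠ 0 := by
    have e : ((x:ℂ) - 1) = ((x - 1 : ℝ) : ℂ) := by push_cast; ring
    rw [e]
    exact Complex.ofReal_ne_zero.mpr (ne_of_gt hx1)
  have hxC2ne : ((x : ℂ) + 1) ≠ 0 := by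
    have e : ((x:ℂ) + 1) = ((x + 1 : ℝ) : ℂ) := by push_cast; ring
    rw [e]
    exact Complex.ofReal_ne_zero.mpr (ne_of_gt hx2)
  have hθC : ((θ : ℝ) : ℂ) = (Real.pi : ℂ) / ((x:ℂ) - 1) := by
    rw [hθdef]; push_cast; ring
  have hφC : ((φ : ℝ) : ℂ) = (Real.pi : ℂ) / ((x:ℂ) + 1) := by
    rw [hφdef]; push_cast; ring
  have hNx : (N : ℂ) = (x : ℂ) := by rw [hxdef]; push_cast; ring
  have hmx : (m : ℂ) * 2 = (x : ℂ) := by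
    rw [hxdef, hNm]; push_cast; ring
  -- s and t in terms of a, b
  have hs2 : s = Complex.exp (2 * a) := by
    rw [hs, hxC1]
    congr 1
    rw [hadef, hθC]
    field_simp
  have ht2 : t = Complex.exp (2 * b) := by
    rw [ht, hxC2]
    congr 1
    rw [hbdef, hφC]
    field_simp
  have hsm : s ^ m = -Complex.exp a := by
    rw [hs2, ← Complex.exp_nat_mul]
    have harg : (m : ℂ) * (2 * a) = Real.pi * I + a := by
      rw [hadef, hθC]
      field_simp
      linear_combination hmx
    rw [harg, Complex.exp_add, Complex.exp_pi_mul_I]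
    ring
  have htm : t ^ m = -Complex.exp (-b) := by
    rw [ht2, ← Complex.exp_nat_mul]
    have harg : (m : ℂ) * (2 * b) = Real.pi * I + -b := by
      rw [hbdef, hφC]
      field_simp
      linear_combination hmx
    rw [harg, Complex.exp_add, Complex.exp_pi_mul_I]
    ring
  -- nonvanishing
  have hEa : Complex.exp a - 1 ≠ 0 := exp_sub_one_ne ha_half ha0
  have hEb : Complex.exp b - 1 ≠ 0 := exp_sub_one_ne hb_half hb0
  have hEa1 : Complex.exp a + 1 ≠ 0 := exp_add_one_ne ha_half
  have hEb1 : Complex.exp b + 1 ≠ 0 := exp_add_one_ne hb_half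
  have hexpa : Complex.exp a ≠ 0 := Complex.exp_ne_zero a
  have hexpb : Complex.exp b ≠ 0 := Complex.exp_ne_zero b
  -- s - 1 and t - 1 factorizations
  have hs1 : s - 1 = (Complex.exp a - 1) * (Complex.exp a + 1) := by
    rw [hs2, show (2:ℂ) * a = a + a by ring, Complex.exp_add]; ring
  have ht1 : t - 1 = (Complex.exp b - 1) * (Complex.exp b + 1) := by
    rw [ht2, show (2:ℂ) * b = b + b by ring, Complex.exp_add]; ring
  -- the key form of qN
  have hqform : qN = -(1/(Complex.exp a - 1)) + Complex.exp (a - b) * (1/(Complex.exp b - 1)) := by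
    rw [hq, hsm, htm, hs1, ht1, Complex.exp_sub, Complex.exp_neg]
    field_simp
    ring
  -- error terms
  set A : ℂ := 1/(Complex.exp a - 1) with hA
  set B : ℂ := 1/(Complex.exp b - 1) with hB
  have he1 : ‖A - 1/a + 1/2‖ ≤ 3 * θ := by
    rw [hA, ← habs_a]
    exact expand_bound ha_half ha0
  have he2 : ‖B - 1/b + 1/2‖ ≤ 3 * φ := by
    rw [hB, ← habs_b]
    exact expand_bound hb_half hb0
  have habsab : ‖a - b‖ = θ - φ := by
    have e : a - b = ((θ - φ : ℝ) : ℂ) * I := by rw [hadef, hbdef]; push_cast; ring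
    rw [e, norm_mul, Complex.norm_I, mul_one, Complex.norm_real]
    exact abs_of_pos (by linarith)
  have hg : ‖Complex.exp (a - b) - 1‖ ≤ 2 * (θ - φ) := by
    rw [← habsab]
    exact Complex.norm_exp_sub_one_le (by rw [habsab]; linarith)
  have hπ3 : (3:ℝ) < Real.pi := Real.pi_gt_three
  have hBx : ‖B‖ ≤ x := by
    have hlow : φ / 2 ≤ ‖Complex.exp b - 1‖ := by
      have := exp_sub_one_lower hb_half
      rwa [habs_b] at this
    have hpos : (0:ℝ) < ‖Complex.exp b - 1‖ := lt_of_lt_of_le (by linarith) hlow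
    rw [hB, norm_div]
    simp only [norm_one]
    rw [div_le_iff₀ hpos]
    have h2φ : 2 ≤ φ * x := by
      rw [hφdef, div_mul_eq_mul_div, le_div_iff₀ hx2]
      nlinarith
    nlinarith
  have key : -(1/a) + 1/b + 2*I/(Real.pi:ℂ) = 0 := by
    have hπC : ((Real.pi:ℝ) : ℂ) ≠ 0 := Complex.ofReal_ne_zero.mpr (ne_of_gt hπ)
    rw [hadef, hbdef, hθC, hφC]
    field_simp
    ring_nf
    simp [Complex.I_sq]
  have herr : qN - (-(2*I)/(Real.pi:ℂ)) =
      (B - 1/b + 1/2) - (A - 1/a + 1/2) + (Complex.exp (a - b) - 1) * B := by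
    rw [hqform]
    linear_combination key
  have hstep : ‖qN - (-(2*I)/(Real.pi:ℂ))‖ ≤ 3*φ + 3*θ + 2*(θ-φ)*x := by
    rw [herr]
    calc ‖(B - 1/b + 1/2) - (A - 1/a + 1/2) + (Complex.exp (a - b) - 1) * B‖
        ≤ ‖(B - 1/b + 1/2) - (A - 1/a + 1/2)‖ +
            ‖(Complex.exp (a - b) - 1) * B‖ := norm_add_le _ _
      _ ≤ (‖B - 1/b + 1/2‖ + ‖A - 1/a + 1/2‖) +
            ‖Complex.exp (a - b) - 1‖ * ‖B‖ := by
          gcongr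
          · simpa using norm_sub_le (B - 1/b + 1/2) (A - 1/a + 1/2)
          · rw [norm_mul]
      _ ≤ (3*φ + 3*θ) + (2*(θ-φ)) * x :=
          add_le_add (add_le_add he2 he1)
            (mul_le_mul hg hBx (norm_nonneg _) (by linarith))
      _ = 3*φ + 3*θ + 2*(θ-φ)*x := by ring
  have hfinal : 3*φ + 3*θ + 2*(θ-φ)*x ≤ 40 / x := by
    have hxpos : (0:ℝ) < x := by linarith
    have h3 : 2*(θ-φ)*x ≤ 14/x := by
      have h7 : (7:ℝ)/x^2 * x = 7/x := by field_simp
      calc 2*(θ-φ)*x ≤ 2*(7/x^2)*x := by nlinarith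
        _ = 2*(7/x) := by rw [mul_assoc, h7]
        _ = 14/x := by ring
    have h1 : 3*θ ≤ 12/x := by
      have : (3:ℝ)*(4/x) = 12/x := by ring
      nlinarith
    have h2 : 3*φ ≤ 12/x := by nlinarith
    have hsum : (12:ℝ)/x + 12/x + 14/x = 38/x := by ring
    have h38 : (38:ℝ)/x ≤ 40/x := by gcongr <;> norm_num
    linarith
  have hmain : ‖qN - (-(2*I)/(Real.pi:ℂ))‖ ≤ 40 / x := le_trans hstep hfinal
  constructor
  · exact hmain
  · have habs2 : ‖-(2*I)/(Real.pi:ℂ)‖ = 2/Real.pi := by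
      rw [norm_div, norm_neg]
      simp [Complex.norm_real, abs_of_pos hπ, Complex.norm_I]
    have htri : ‖-(2*I)/(Real.pi:ℂ)‖ - ‖qN‖ ≤
        ‖qN - (-(2*I)/(Real.pi:ℂ))‖ := by
      have h := norm_sub_norm_le (-(2*I)/(Real.pi:ℂ)) qN
      have e : ‖(-(2*I)/(Real.pi:ℂ)) - qN‖ = ‖qN - (-(2*I)/(Real.pi:ℂ))‖ :=
        norm_sub_rev _ _
      simpa [e] using h
    have h40 : (40:ℝ)/x ≤ 1/Real.pi := by
      rw [div_le_div_iff₀ (by linarith) hπ]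
      nlinarith
    rw [habs2] at htri
    have : 2/Real.pi - 1/Real.pi = 1/Real.pi := by ring
    linarith
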